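/- For every tree T with |T| = n, the set S_T is nonempty; equivalently, the map φ from S_n to the set of trees with n internal vertices is surjective. -/

import Mathlib

/-- The minimum of `a :: l` (computed by folding `min`) is a member of `a :: l`. -/
lemma foldr_min_mem (a : ℤ) : ∀ l : List ℤ, l.foldr min a ∈ a :: l := by
  intro l
  induction l with
  | nil => simp
  | cons b l ih =>
    simp only [List.foldr_cons]
    rcases min_choice b (l.foldr min a) with h | h
    · rw [h]; simp
    · rw [h]
      rcases List.mem_cons.mp ih with h' | h'
      · simp [h']
      · simp [h']

/-- The planar binary tree `φ(I)` associated to a list `I` of (distinct) integers: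
`φ` of the empty list is the empty tree `|`, and `φ(I) = φ(I₁) ∨ φ(I₂)` where
`I = I₁ · (min I) · I₂` is the splitting of `I` at its minimal entry. -/
def phi : List ℤ → Tree Unit
  | [] => Tree.nil
  | a :: l =>
    Tree.node ()
      (phi ((a :: l).take ((a :: l).idxOf (l.foldr min a))))
      (phi ((a :: l).drop ((a :: l).idxOf (l.foldr min a) + 1)))
termination_by l => l.length
decreasing_by
  · have hm := foldr_min_mem a l
    have hk := List.idxOf_lt_length_iff.mpr hm
    simp only [List.length_take, List.length_cons, List.foldr_attach] at *
    omega
  · simp only [List.length_drop, List.length_cons]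
    omega

/-- The standardization of a list `I` of distinct integers: the list whose `j`-th entry is
the (1-indexed) position of `I_j` in the increasing ordering of the entries of `I`. -/
def stdz (I : List ℤ) : List ℤ :=
  I.map (fun x => ((I.filter (fun y => y < x)).length : ℤ) + 1)

/-- `l` is (the list of values of) a permutation of `{1, …, n}`. -/
def IsPermList (n : ℕ) (l : List ℤ) : Prop :=
  l.Perm ((List.range n).map (fun k => (k : ℤ) + 1))

/-- `S_T`: the set of permutations `σ ∈ S_{|T|}` (identified with their lists of values
`(σ(1),…,σ(n))`) such that `φ(σ) = T`. -/
def STree (T : Tree Unit) : Set (List ℤ) :=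
  {l | IsPermList T.numNodes l ∧ phi l = T}

lemma foldr_min_le (a : ℤ) (l : List ℤ) :
    l.foldr min a ≤ a ∧ ∀ x ∈ l, l.foldr min a ≤ x := by
  induction l with
  | nil => simp
  | cons b t ih =>
    simp only [List.foldr_cons]
    refine ⟨le_trans (min_le_right _ _) ih.1, ?_⟩
    intro x hx
    rcases List.mem_cons.mp hx with h | h
    · subst h; exact min_le_left _ _
    · exact le_trans (min_le_right _ _) (ih.2 x h)

lemma phi_split (A B : List ℤ) (m : ℤ) (hA : ∀ x ∈ A, m < x) (hB : ∀ x ∈ B, m < x) :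
    phi (A ++ m :: B) = Tree.node () (phi A) (phi B) := by
  obtain ⟨a, t, ht⟩ : ∃ a t, A ++ m :: B = a :: t := by
    cases A with
    | nil => exact ⟨m, B, rfl⟩
    | cons a A' => exact ⟨a, A' ++ m :: B, rfl⟩
  have hmem : m ∈ A ++ m :: B := by simp
  have hmu : t.foldr min a = m := by
    have h1 : t.foldr min a ∈ A ++ m :: B := by rw [ht]; exact foldr_min_mem a t
    have h2 : t.foldr min a ≤ m := by
      rw [ht] at hmem
      rcases List.mem_cons.mp hmem with h | h
      · rw [h]; exact (foldr_min_le a t).1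
      · exact (foldr_min_le a t).2 m h
    rcases List.mem_append.mp h1 with h | h
    · exact absurd (hA _ h) (not_lt.mpr h2)
    · rcases List.mem_cons.mp h with h | h
      · exact h
      · exact absurd (hB _ h) (not_lt.mpr h2)
  have hnotA : m ∉ A := fun h => lt_irrefl m (hA m h)
  have hidx : (A ++ m :: B).idxOf m = A.length := by
    rw [List.idxOf_append_of_notMem hnotA, List.idxOf_cons_self]; ring
  have htake : (A ++ m :: B).take ((A ++ m :: B).idxOf m) = A := by
    rw [hidx]; exact List.take_left (l₁ := A) (l₂ := m :: B)
  have hdrop : (A ++ m :: B).drop ((A ++ m :: B).idxOf m + 1) = B := by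
    rw [hidx]
    have : A ++ m :: B = (A ++ [m]) ++ B := by simp
    rw [this, List.drop_left' (by simp)]
  rw [ht, phi]
  rw [← ht, hmu, htake, hdrop]

def build (c : ℤ) : Tree Unit → List ℤ
  | .nil => []
  | .node _ L R => build (c + 1) L ++ c :: build (c + (L.numNodes + 1)) R

lemma build_lb : ∀ (T : Tree Unit) (c : ℤ), ∀ x ∈ build c T, c ≤ x := by
  intro T
  induction T with
  | nil => intro c x hx; simp [build] at hx
  | node _ L R ihL ihR =>
    intro c x hx
    simp only [build, List.mem_append, List.mem_cons] at hx
    rcases hx with h | h | h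
    · linarith [ihL (c + 1) x h]
    · omega
    · linarith [ihR (c + (L.numNodes + 1)) x h]

lemma phi_build : ∀ (T : Tree Unit) (c : ℤ), phi (build c T) = T := by
  intro T
  induction T with
  | nil => intro c; simp [build, phi]
  | node u L R ihL ihR =>
    intro c
    show phi (build (c + 1) L ++ c :: build (c + (L.numNodes + 1)) R) = _
    rw [phi_split _ _ c (fun x hx => by linarith [build_lb L (c+1) x hx])
      (fun x hx => by linarith [build_lb R (c + (L.numNodes + 1)) x hx]), ihL, ihR]

lemma map_range_add (c : ℤ) (a b : ℕ) :
    (List.range (a + b)).map (fun k : ℕ => c + (k : ℤ)) =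
      (List.range a).map (fun k : ℕ => c + (k : ℤ)) ++
        (List.range b).map (fun k : ℕ => (c + (a : ℤ)) + (k : ℤ)) := by
  rw [List.range_add, List.map_append, List.map_map]
  congr 1
  apply List.map_congr_left
  intro k _
  simp only [Function.comp_apply]
  push_cast
  ring

lemma build_perm : ∀ (T : Tree Unit) (c : ℤ),
    (build c T).Perm ((List.range T.numNodes).map (fun k : ℕ => c + (k : ℤ))) := by
  intro T
  induction T with
  | nil => intro c; simp [build]
  | node u L R ihL ihR =>
    intro c
    show (build (c + 1) L ++ c :: build (c + (L.numNodes + 1)) R).Perm _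
    have h1 : (build (c + 1) L ++ c :: build (c + (L.numNodes + 1)) R).Perm
        (c :: (build (c + 1) L ++ build (c + (L.numNodes + 1)) R)) :=
      List.perm_middle
    refine h1.trans ?_
    have hnum : (Tree.node u L R).numNodes = 1 + (L.numNodes + R.numNodes) := by
      simp [Tree.numNodes]; omega
    have hr : (List.range (Tree.node u L R).numNodes).map (fun k : ℕ => c + (k : ℤ)) =
        c :: ((List.range L.numNodes).map (fun k : ℕ => (c + 1) + (k : ℤ)) ++
          (List.range R.numNodes).map (fun k : ℕ => (c + ((L.numNodes : ℤ) + 1)) + (k : ℤ))) := by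
      rw [hnum, map_range_add, map_range_add]
      simp only [ List.map_cons, List.map_nil, Nat.cast_zero, add_zero,
        Nat.cast_one, List.singleton_append, List.cons_append]
      simp only [List.range_succ, List.range_zero, List.nil_append, List.map_cons, List.map_nil,
        Nat.cast_zero, add_zero, List.singleton_append, List.cons_append]
      congr 2
      apply List.map_congr_left; intro k _; push_cast; ring
    rw [hr]
    exact List.Perm.cons c (List.Perm.append (ihL (c + 1)) (ihR (c + ((L.numNodes : ℤ) + 1))))

/-- For every tree `T`, the set `S_T` is nonempty; equivalently, the map `φ` from
permutations (of the appropriate order) to trees is surjective. -/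
theorem STree_nonempty (T : Tree Unit) : (STree T).Nonempty := by
  refine ⟨build 1 T, ?_, phi_build T 1⟩
  unfold IsPermList
  refine (build_perm T 1).trans (List.Perm.of_eq ?_)
  simp only [bind_pure_comp, List.map_eq_map, List.map_map]
  apply List.map_congr_left
  intro k _
  simp only [Function.comp_apply]
  ring
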